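/- For positive integers t, k and n, every 2t-cancellative (t+1)k-uniform hypergraph on n vertices has at most 2·C(n,k) + 2t + 1 edges. -/

import Mathlib

/-- An `r`-graph is `G(v,e)`-free if the union of any `e` distinct edges
contains at least `v+1` vertices. -/
def GFree {α : Type*} [DecidableEq α] (v e : ℕ) (H : Finset (Finset α)) : Prop :=
  ∀ S ⊆ H, S.card = e → v + 1 ≤ (S.sup id).card

/-- `H` is `t`-cancellative: for any `t+2` distinct edges `A 0, …, A (t-1), B, C`,
`(⋃ i, A i) ∪ B ≠ (⋃ i, A i) ∪ C`. -/
def Cancellative {α : Type*} [DecidableEq α] (t : ℕ) (H : Finset (Finset α)) : Prop :=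
  ∀ A : Fin t → Finset α, Function.Injective A → (∀ i, A i ∈ H) →
    ∀ B ∈ H, ∀ C ∈ H, B ≠ C → (∀ i, B ≠ A i) → (∀ i, C ≠ A i) →
      Finset.univ.sup A ∪ B ≠ Finset.univ.sup A ∪ C

/-- `H` is `t`-union-free. -/
def UnionFree {α : Type*} [DecidableEq α] (t : ℕ) (H : Finset (Finset α)) : Prop :=
  ∀ 𝒜 ⊆ H, ∀ ℬ ⊆ H, 1 ≤ 𝒜.card → 𝒜.card ≤ t → 1 ≤ ℬ.card → ℬ.card ≤ t →
    𝒜 ≠ ℬ → 𝒜.sup id ≠ ℬ.sup id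

/-- `H` is `t`-cover-free. -/
def CoverFree {α : Type*} [DecidableEq α] (t : ℕ) (H : Finset (Finset α)) : Prop :=
  ∀ A : Fin t → Finset α, Function.Injective A → (∀ i, A i ∈ H) →
    ∀ B ∈ H, (∀ i, B ≠ A i) → ¬ B ⊆ Finset.univ.sup A

section Aux

variable {n t k : ℕ}

/-- The k-subsets of `Fin n` covered by some edge of `G`. -/
private def TT (n k : ℕ) (G : Finset (Finset (Fin n))) : Finset (Finset (Fin n)) :=
  (Finset.powersetCard k (Finset.univ : Finset (Fin n))).filter (fun S => ∃ A ∈ G, S ⊆ A)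

/-- Cover a set of size `t'·k` (inside an edge of `G`) by at most `t'` edges of `G`
avoiding two forbidden edges, provided every covered `k`-set has degree ≥ 3. -/
private lemma cover_lemma (hk : 1 ≤ k) (G : Finset (Finset (Fin n)))
    (hdeg : ∀ X : Finset (Fin n), X.card = k → (∃ A ∈ G, X ⊆ A) →
      3 ≤ (G.filter (fun E => X ⊆ E)).card)
    (B C : Finset (Fin n)) :
    ∀ t' : ℕ, ∀ W : Finset (Fin n), W.card = t' * k → (∃ A ∈ G, W ⊆ A) →
      ∃ D : Finset (Finset (Fin n)), D ⊆ G ∧ D.card ≤ t' ∧ B ∉ D ∧ C ∉ D ∧ W ⊆ D.sup id := by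
  intro t'
  induction t' with
  | zero =>
    intro W hW _
    have : W = ∅ := Finset.card_eq_zero.mp (by simpa using hW)
    exact ⟨∅, by simp, by simp, by simp, by simp, by simp [this]⟩
  | succ t' ih =>
    intro W hW hWA
    obtain ⟨A₀, hA₀G, hWA₀⟩ := hWA
    have hkW : k ≤ W.card := by
      rw [hW, Nat.succ_mul]; omega
    obtain ⟨X, hXW, hXk⟩ := Finset.exists_subset_card_eq hkW
    have hXA₀ : X ⊆ A₀ := hXW.trans hWA₀
    have h3 : 3 ≤ (G.filter (fun E => X ⊆ E)).card := hdeg X hXk ⟨A₀, hA₀G, hXA₀⟩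
    -- find E ∈ G with X ⊆ E, E ≠ B, E ≠ C
    have hne : (((G.filter (fun E => X ⊆ E)).erase B).erase C).Nonempty := by
      by_contra hcon
      rw [Finset.not_nonempty_iff_eq_empty] at hcon
      have hsub : (G.filter (fun E => X ⊆ E)) ⊆ {B, C} := by
        intro E hE
        by_contra hEBC
        simp only [Finset.mem_insert, Finset.mem_singleton, not_or] at hEBC
        have : E ∈ ((G.filter (fun E => X ⊆ E)).erase B).erase C :=
          Finset.mem_erase.mpr ⟨hEBC.2, Finset.mem_erase.mpr ⟨hEBC.1, hE⟩⟩
        simp [hcon] at this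
      have := (Finset.card_le_card hsub).trans (Finset.card_insert_le _ _)
      simp at this
      omega
    obtain ⟨E, hE⟩ := hne
    have hEC : E ≠ C := (Finset.mem_erase.mp hE).1
    have hE' := (Finset.mem_erase.mp hE).2
    have hEB : E ≠ B := (Finset.mem_erase.mp hE').1
    have hEG : E ∈ G := (Finset.mem_filter.mp (Finset.mem_erase.mp hE').2).1
    have hXE : X ⊆ E := (Finset.mem_filter.mp (Finset.mem_erase.mp hE').2).2
    have hW' : (W \ X).card = t' * k := by
      rw [Finset.card_sdiff_of_subset hXW, hW, hXk, Nat.succ_mul]; omega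
    obtain ⟨D, hDG, hDcard, hBD, hCD, hWD⟩ := ih (W \ X) hW' ⟨A₀, hA₀G, (Finset.sdiff_subset).trans hWA₀⟩
    refine ⟨insert E D, ?_, ?_, ?_, ?_, ?_⟩
    · exact Finset.insert_subset hEG hDG
    · exact (Finset.card_insert_le _ _).trans (by omega)
    · simp only [Finset.mem_insert, not_or]
      exact ⟨fun hbe => hEB hbe.symm, hBD⟩
    · simp only [Finset.mem_insert, not_or]
      exact ⟨fun hce => hEC hce.symm, hCD⟩
    · intro x hx
      by_cases hxX : x ∈ X
      · exact Finset.le_sup (f := id) (Finset.mem_insert_self E D) (hXE hxX)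
      · have : x ∈ D.sup id := hWD (Finset.mem_sdiff.mpr ⟨hx, hxX⟩)
        exact Finset.mem_of_subset (Finset.sup_mono (Finset.subset_insert E D)) this

private lemma main_lemma (ht : 1 ≤ t) (hk : 1 ≤ k)
    (H : Finset (Finset (Fin n)))
    (huniform : ∀ A ∈ H, A.card = (t + 1) * k)
    (h : Cancellative (2 * t) H)
    (hbig : 2 * t + 2 ≤ H.card) :
    ∀ (m : ℕ) (G : Finset (Finset (Fin n))), G.card ≤ m → G ⊆ H →
      G.card ≤ 2 * (TT n k G).card := by
  intro m
  induction m with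
  | zero => intro G hGm _; omega
  | succ m ih =>
    intro G hGm hGH
    by_cases hS : ∃ S : Finset (Fin n), S.card = k ∧ 1 ≤ (G.filter (fun E => S ⊆ E)).card ∧
        (G.filter (fun E => S ⊆ E)).card ≤ 2
    · obtain ⟨S, hSk, hd1, hd2⟩ := hS
      obtain ⟨A₁, hA₁⟩ := Finset.card_pos.mp hd1
      have hA₁G : A₁ ∈ G := (Finset.mem_filter.mp hA₁).1
      have hSA₁ : S ⊆ A₁ := (Finset.mem_filter.mp hA₁).2
      set G' := G.filter (fun E => ¬ S ⊆ E) with hG'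
      have hsplit : (G.filter (fun E => S ⊆ E)).card + G'.card = G.card :=
        Finset.card_filter_add_card_filter_not _
      have hG'G : G' ⊆ G := Finset.filter_subset _ _
      have hG'lt : G'.card < G.card := by
        refine Finset.card_lt_card ?_
        refine Finset.ssubset_iff_of_subset hG'G |>.mpr ⟨A₁, hA₁G, ?_⟩
        simp [hG', hSA₁]
      have hIH : G'.card ≤ 2 * (TT n k G').card := ih G' (by omega) (hG'G.trans hGH)
      -- TT G' ⊆ (TT G).erase S and S ∈ TT G
      have hSTT : S ∈ TT n k G := by
        refine Finset.mem_filter.mpr ⟨?_, A₁, hA₁G, hSA₁⟩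
        exact Finset.mem_powersetCard.mpr ⟨Finset.subset_univ S, hSk⟩
      have hTTsub : TT n k G' ⊆ (TT n k G).erase S := by
        intro S' hS'
        obtain ⟨hS'p, A', hA'G', hS'A'⟩ := Finset.mem_filter.mp hS'
        refine Finset.mem_erase.mpr ⟨?_, Finset.mem_filter.mpr ⟨hS'p, A', hG'G hA'G', hS'A'⟩⟩
        rintro rfl
        exact (Finset.mem_filter.mp hA'G').2 hS'A'
      have hcTT : (TT n k G').card ≤ (TT n k G).card - 1 := by
        have := Finset.card_le_card hTTsub
        rwa [Finset.card_erase_of_mem hSTT] at this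
      have hTTpos : 1 ≤ (TT n k G).card := Finset.card_pos.mpr ⟨S, hSTT⟩
      omega
    · -- every covered k-set has degree ≥ 3: derive G = ∅ or a contradiction
      push_neg at hS
      have hdeg : ∀ X : Finset (Fin n), X.card = k → (∃ A ∈ G, X ⊆ A) →
          3 ≤ (G.filter (fun E => X ⊆ E)).card := by
        intro X hXk ⟨A, hAG, hXA⟩
        have h1 : 1 ≤ (G.filter (fun E => X ⊆ E)).card :=
          Finset.card_pos.mpr ⟨A, Finset.mem_filter.mpr ⟨hAG, hXA⟩⟩
        have := hS X hXk h1
        omega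
      rcases G.eq_empty_or_nonempty with rfl | ⟨B, hBG⟩
      · simp
      exfalso
      have hBH : B ∈ H := hGH hBG
      have hBcard : B.card = (t + 1) * k := huniform B hBH
      have hkB : k ≤ B.card := by rw [hBcard, Nat.succ_mul]; omega
      obtain ⟨S, hSB, hSk⟩ := Finset.exists_subset_card_eq hkB
      have h3 : 3 ≤ (G.filter (fun E => S ⊆ E)).card := hdeg S hSk ⟨B, hBG, hSB⟩
      have hBmem : B ∈ G.filter (fun E => S ⊆ E) := Finset.mem_filter.mpr ⟨hBG, hSB⟩
      have hne : ((G.filter (fun E => S ⊆ E)).erase B).Nonempty := by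
        rw [← Finset.card_pos, Finset.card_erase_of_mem hBmem]; omega
      obtain ⟨C, hC⟩ := hne
      have hCB : C ≠ B := (Finset.mem_erase.mp hC).1
      have hCG : C ∈ G := (Finset.mem_filter.mp (Finset.mem_erase.mp hC).2).1
      have hSC : S ⊆ C := (Finset.mem_filter.mp (Finset.mem_erase.mp hC).2).2
      have hCH : C ∈ H := hGH hCG
      have hCcard : C.card = (t + 1) * k := huniform C hCH
      -- cover B \ S and C \ S
      have hWB : (B \ S).card = t * k := by
        rw [Finset.card_sdiff_of_subset hSB, hBcard, hSk, Nat.succ_mul]; omega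
      have hWC : (C \ S).card = t * k := by
        rw [Finset.card_sdiff_of_subset hSC, hCcard, hSk, Nat.succ_mul]; omega
      obtain ⟨D₁, hD₁G, hD₁card, hBD₁, hCD₁, hsub₁⟩ :=
        cover_lemma hk G hdeg B C t (B \ S) hWB ⟨B, hBG, Finset.sdiff_subset⟩
      obtain ⟨D₂, hD₂G, hD₂card, hBD₂, hCD₂, hsub₂⟩ :=
        cover_lemma hk G hdeg B C t (C \ S) hWC ⟨C, hCG, Finset.sdiff_subset⟩
      set D := D₁ ∪ D₂ with hD
      have hDG : D ⊆ G := Finset.union_subset hD₁G hD₂G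
      have hDcard : D.card ≤ 2 * t := by
        have := Finset.card_union_le D₁ D₂
        rw [← hD] at this
        omega
      have hBD : B ∉ D := by simp [hD, hBD₁, hBD₂]
      have hCD : C ∉ D := by simp [hD, hCD₁, hCD₂]
      -- pad D to exactly 2t edges inside (H.erase B).erase C
      set target := (H.erase B).erase C with htarget
      have hDtarget : D ⊆ target := by
        intro E hE
        refine Finset.mem_erase.mpr ⟨?_, Finset.mem_erase.mpr ⟨?_, hGH (hDG hE)⟩⟩
        · rintro rfl; exact hCD hE
        · rintro rfl; exact hBD hE
      have hCtarget' : C ∈ H.erase B := Finset.mem_erase.mpr ⟨hCB, hCH⟩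
      have htargetcard : 2 * t ≤ target.card := by
        rw [htarget, Finset.card_erase_of_mem hCtarget', Finset.card_erase_of_mem hBH]
        omega
      obtain ⟨u, hDu, hutarget, hucard⟩ :=
        Finset.exists_subsuperset_card_eq (n := 2 * t - D.card + D.card) hDtarget (by omega) (by omega)
      have hucard' : u.card = 2 * t := by rw [hucard]; omega
      have hBu : B ∉ u := by
        intro hBu
        have := hutarget hBu
        rw [htarget] at this
        exact (Finset.mem_erase.mp (Finset.mem_erase.mp this).2).1 rfl
      have hCu : C ∉ u := by
        intro hCu
        have := hutarget hCu
        rw [htarget] at this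
        exact (Finset.mem_erase.mp this).1 rfl
      have huH : u ⊆ H := fun E hE =>
        Finset.mem_of_mem_erase (Finset.mem_of_mem_erase (hutarget hE))
      -- enumeration
      let e : {x // x ∈ u} ≃ Fin (2 * t) := Finset.equivFinOfCardEq hucard'
      let A : Fin (2 * t) → Finset (Fin n) := fun i => (e.symm i : Finset (Fin n))
      have hAinj : Function.Injective A := by
        intro i j hij
        have : e.symm i = e.symm j := Subtype.ext hij
        exact e.symm.injective this
      have hAmem : ∀ i, A i ∈ H := fun i => huH (e.symm i).2
      have hAu : ∀ E ∈ u, E ≤ Finset.univ.sup A := by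
        intro E hEu
        have : A (e ⟨E, hEu⟩) = E := by simp [A]
        calc E = A (e ⟨E, hEu⟩) := this.symm
          _ ≤ Finset.univ.sup A := Finset.le_sup (Finset.mem_univ _)
      have hDsup : D.sup id ≤ Finset.univ.sup A := by
        refine Finset.sup_le fun E hE => hAu E (hDu hE)
      have hBCsub : B \ C ⊆ Finset.univ.sup A := by
        intro x hx
        obtain ⟨hxB, hxC⟩ := Finset.mem_sdiff.mp hx
        have hxS : x ∉ S := fun hxS => hxC (hSC hxS)
        have : x ∈ D₁.sup id := hsub₁ (Finset.mem_sdiff.mpr ⟨hxB, hxS⟩)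
        exact hDsup (Finset.mem_of_subset (Finset.sup_mono Finset.subset_union_left) this)
      have hCBsub : C \ B ⊆ Finset.univ.sup A := by
        intro x hx
        obtain ⟨hxC, hxB⟩ := Finset.mem_sdiff.mp hx
        have hxS : x ∉ S := fun hxS => hxB (hSB hxS)
        have : x ∈ D₂.sup id := hsub₂ (Finset.mem_sdiff.mpr ⟨hxC, hxS⟩)
        exact hDsup (Finset.mem_of_subset (Finset.sup_mono Finset.subset_union_right) this)
      have hkey : Finset.univ.sup A ∪ B = Finset.univ.sup A ∪ C := by
        apply Finset.Subset.antisymm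
        · refine Finset.union_subset Finset.subset_union_left ?_
          intro x hxB
          by_cases hxC : x ∈ C
          · exact Finset.mem_union_right _ hxC
          · exact Finset.mem_union_left _ (hBCsub (Finset.mem_sdiff.mpr ⟨hxB, hxC⟩))
        · refine Finset.union_subset Finset.subset_union_left ?_
          intro x hxC
          by_cases hxB : x ∈ B
          · exact Finset.mem_union_right _ hxB
          · exact Finset.mem_union_left _ (hCBsub (Finset.mem_sdiff.mpr ⟨hxC, hxB⟩))
      have hBA : ∀ i, B ≠ A i := by
        intro i hBA
        exact hBu (hBA ▸ (e.symm i).2)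
      have hCA : ∀ i, C ≠ A i := by
        intro i hCA
        exact hCu (hCA ▸ (e.symm i).2)
      exact h A hAinj hAmem B hBH C hCH (Ne.symm hCB) hBA hCA hkey

end Aux

/-- Every `2t`-cancellative `(t+1)k`-uniform hypergraph on `n` vertices has at
most `2·C(n,k) + 2t + 1` edges. -/
theorem stmt_7 (n t k : ℕ) (ht : 1 ≤ t) (hk : 1 ≤ k) (hn : 1 ≤ n)
    (H : Finset (Finset (Fin n)))
    (huniform : ∀ A ∈ H, A.card = (t + 1) * k)
    (h : Cancellative (2 * t) H) :
    H.card ≤ 2 * n.choose k + 2 * t + 1 := by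
  by_cases hbig : 2 * t + 2 ≤ H.card
  · have hmain := main_lemma ht hk H huniform h hbig H.card H le_rfl Finset.Subset.rfl
    have hTT : (TT n k H).card ≤ n.choose k := by
      have h1 : (TT n k H).card ≤ (Finset.powersetCard k (Finset.univ : Finset (Fin n))).card :=
        Finset.card_le_card (Finset.filter_subset _ _)
      rwa [Finset.card_powersetCard, Finset.card_univ, Fintype.card_fin] at h1
    omega
  · omega
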